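/- The space D of adapted càdlàg processes Y on [0,T] with ‖Y‖_D := sup_{τ∈T_{0,T}} sup_{Q∈Q} E^Q[|Y_τ|] < ∞ and which are uniformly integrable under Q (i.e. lim_{N→∞} sup_{τ} sup_{Q∈Q} E^Q[|Y_τ|1_{|Y_τ|≥N}] = 0) is complete with respect to the norm ‖·‖_D. -/

import Mathlib

open MeasureTheory Filter Set ENNReal

variable {Ω : Type*} {m0 : MeasurableSpace Ω}

/-- The `[0,T]`-valued stopping times of the filtration `ℱ`. -/
def STimes (ℱ : Filtration ℝ m0) (T : ℝ) : Type _ :=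
  {τ : Ω → ℝ // IsStoppingTime ℱ (fun ω => (τ ω : WithTop ℝ)) ∧ ∀ ω, τ ω ∈ Set.Icc 0 T}

/-- The norm `‖Y‖_𝒟 = sup_{τ ∈ T_{0,T}} sup_{Q ∈ 𝒬} E^Q[|Y_τ|]`. -/
noncomputable def Dnorm (𝒬 : Set (Measure Ω)) (ℱ : Filtration ℝ m0) (T : ℝ)
    (Y : ℝ → Ω → ℝ) : ℝ≥0∞ :=
  ⨆ τ : STimes ℱ T, ⨆ Q ∈ 𝒬, ∫⁻ ω, ENNReal.ofReal |Y (τ.1 ω) ω| ∂Q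

/-- Uniform integrability of `{Y_τ}` under the family `𝒬`:
`lim_N sup_τ sup_{Q∈𝒬} E^Q[|Y_τ| 1_{|Y_τ| ≥ N}] = 0`. -/
def DUnifIntegrable (𝒬 : Set (Measure Ω)) (ℱ : Filtration ℝ m0) (T : ℝ)
    (Y : ℝ → Ω → ℝ) : Prop :=
  Tendsto
    (fun N : ℝ => ⨆ τ : STimes ℱ T, ⨆ Q ∈ 𝒬,
      ∫⁻ ω in {ω | N ≤ |Y (τ.1 ω) ω|}, ENNReal.ofReal |Y (τ.1 ω) ω| ∂Q)
    atTop (nhds 0)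

/-- Càdlàg paths: right-continuous with left limits. -/
def IsCadlag (Y : ℝ → Ω → ℝ) : Prop :=
  ∀ ω, (∀ t, ContinuousWithinAt (fun s => Y s ω) (Set.Ici t) t) ∧
    ∀ t, ∃ l : ℝ, Tendsto (fun s => Y s ω) (nhdsWithin t (Set.Iio t)) (nhds l)


open Topology

section AuxLemmas

variable {Ω : Type*} {m0 : MeasurableSpace Ω}

lemma meas_comp_countable' {ι : Type*} [Countable ι] [MeasurableSpace ι]
    [MeasurableSingletonClass ι] {m : MeasurableSpace Ω}
    (h : Ω → ι) (F : ι → Ω → ℝ)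
    (hh : Measurable h) (hF : ∀ k, Measurable (F k)) :
    Measurable fun ω => F (h ω) ω := by
  intro s hs
  have he : (fun ω => F (h ω) ω) ⁻¹' s = ⋃ k, h ⁻¹' {k} ∩ F k ⁻¹' s := by
    ext ω
    simp only [Set.mem_preimage, Set.mem_iUnion, Set.mem_inter_iff, Set.mem_singleton_iff]
    constructor
    · intro hx; exact ⟨h ω, rfl, hx⟩
    · rintro ⟨k, rfl, hx⟩; exact hx
  rw [he]
  exact MeasurableSet.iUnion fun k => (hh (measurableSet_singleton k)).inter (hF k hs)

lemma meas_stopped' {m : MeasurableSpace Ω} (Z : ℝ → Ω → ℝ)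
    (hZ : ∀ t, Measurable (Z t))
    (hrc : ∀ ω t, ContinuousWithinAt (fun s => Z s ω) (Set.Ici t) t)
    (τ : Ω → ℝ) (hτ : Measurable τ) :
    Measurable fun ω => Z (τ ω) ω := by
  have happrox : ∀ n : ℕ, Measurable fun ω => Z ((⌈τ ω * 2 ^ n⌉ : ℝ) / 2 ^ n) ω := by
    intro n
    exact meas_comp_countable' (fun ω => (⌈τ ω * 2 ^ n⌉ : ℤ))
      (fun k ω => Z ((k : ℝ) / 2 ^ n) ω) ((hτ.mul_const _).ceil) (fun k => hZ _)
  apply measurable_of_tendsto_metrizable happrox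
  rw [tendsto_pi_nhds]
  intro ω
  have h2 : ∀ n : ℕ, (0:ℝ) < 2 ^ n := fun n => by positivity
  have hle : ∀ n : ℕ, τ ω ≤ (⌈τ ω * 2 ^ n⌉ : ℝ) / 2 ^ n := by
    intro n
    rw [le_div_iff₀ (h2 n)]
    exact Int.le_ceil _
  have hub : ∀ n : ℕ, (⌈τ ω * 2 ^ n⌉ : ℝ) / 2 ^ n ≤ τ ω + (2 ^ n)⁻¹ := by
    intro n
    rw [div_le_iff₀ (h2 n)]
    have h1 := (Int.ceil_lt_add_one (τ ω * 2 ^ n)).le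
    calc ((⌈τ ω * 2 ^ n⌉ : ℝ)) ≤ τ ω * 2 ^ n + 1 := h1
      _ = (τ ω + (2 ^ n)⁻¹) * 2 ^ n := by field_simp
  have htend : Tendsto (fun n : ℕ => (⌈τ ω * 2 ^ n⌉ : ℝ) / 2 ^ n) atTop (𝓝 (τ ω)) := by
    have h0 : Tendsto (fun n : ℕ => τ ω + ((2:ℝ) ^ n)⁻¹) atTop (𝓝 (τ ω + 0)) :=
      tendsto_const_nhds.add
        (tendsto_inv_atTop_zero.comp (tendsto_pow_atTop_atTop_of_one_lt (by norm_num)))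
    rw [add_zero] at h0
    exact tendsto_of_tendsto_of_tendsto_of_le_of_le tendsto_const_nhds h0 hle hub
  have htend' : Tendsto (fun n : ℕ => (⌈τ ω * 2 ^ n⌉ : ℝ) / 2 ^ n) atTop
      (𝓝[Set.Ici (τ ω)] (τ ω)) :=
    tendsto_nhdsWithin_of_tendsto_nhds_of_eventually_within _ htend
      (Eventually.of_forall fun n => hle n)
  exact (hrc ω (τ ω)).tendsto.comp htend'

lemma exists_tendsto_of_tail' {f : ℕ → ℝ} {K : ℕ}
    (h : ∀ k, K ≤ k → |f (k+1) - f k| ≤ (2⁻¹:ℝ)^k) :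
    ∃ l, Tendsto f atTop (𝓝 l) := by
  have hc : CauchySeq fun j => f (j + K) := by
    apply cauchySeq_of_le_geometric 2⁻¹ ((2⁻¹:ℝ)^K) (by norm_num)
    intro n
    have hnk : n + 1 + K = n + K + 1 := by omega
    rw [Real.dist_eq, hnk]
    have h1 := h (n + K) le_add_self
    calc |f (n + K) - f (n + K + 1)| = |f (n + K + 1) - f (n + K)| := abs_sub_comm _ _
      _ ≤ (2⁻¹:ℝ)^(n+K) := h1
      _ = (2⁻¹:ℝ)^K * 2⁻¹^n := by rw [pow_add]; ring
  obtain ⟨l, hl⟩ := cauchySeq_tendsto_of_complete hc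
  exact ⟨l, (tendsto_add_atTop_iff_nat K).1 hl⟩

end AuxLemmas


section Maximal
variable {Ω : Type*} {m0 : MeasurableSpace Ω}

lemma le_Dnorm {𝒬 : Set (Measure Ω)} {ℱ : Filtration ℝ m0} {T : ℝ}
    (τ : STimes ℱ T) {Q : Measure Ω} (hQ : Q ∈ 𝒬) (Z : ℝ → Ω → ℝ) :
    ∫⁻ ω, ENNReal.ofReal |Z (τ.1 ω) ω| ∂Q ≤ Dnorm 𝒬 ℱ T Z := by
  refine le_trans ?_ (le_iSup (fun τ' : STimes ℱ T => ⨆ Q' ∈ 𝒬,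
    ∫⁻ ω, ENNReal.ofReal |Z (τ'.1 ω) ω| ∂Q') τ)
  exact le_biSup (fun Q' : Measure Ω => ∫⁻ ω, ENNReal.ofReal |Z (τ.1 ω) ω| ∂Q') hQ

lemma maximal_ineq {ℱ : Filtration ℝ m0} {T : ℝ} (hT : 0 ≤ T)
    {𝒬 : Set (Measure Ω)} {μ : Measure Ω} (hμ𝒬 : μ ∈ 𝒬)
    (Z : ℝ → Ω → ℝ) (hZad : Adapted ℱ Z)
    (hrc : ∀ ω t, ContinuousWithinAt (fun s => Z s ω) (Ici t) t)
    {lam : ℝ} (hlam : 0 < lam) :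
    MeasurableSet {ω | ∃ t ∈ Icc 0 T, lam < |Z t ω|} ∧
    ENNReal.ofReal lam * μ {ω | ∃ t ∈ Icc 0 T, lam < |Z t ω|} ≤ Dnorm 𝒬 ℱ T Z := by
  classical
  -- countable dense set of times
  set S : Set ℝ := insert T (range ((↑) : ℚ → ℝ) ∩ Icc 0 T) with hS
  have hScount : S.Countable :=
    (Set.countable_range _).mono inter_subset_left |>.insert T
  have hSne : S.Nonempty := ⟨T, mem_insert _ _⟩
  obtain ⟨e, he⟩ := hScount.exists_eq_range hSne
  have heS : ∀ i, e i ∈ S := fun i => he ▸ mem_range_self i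
  have heIcc : ∀ i, e i ∈ Icc 0 T := by
    intro i
    rcases heS i with h | h
    · rw [h]; exact ⟨hT, le_refl T⟩
    · exact h.2
  -- the key identity
  have hkey : {ω | ∃ t ∈ Icc 0 T, lam < |Z t ω|} = ⋃ i, {ω | lam < |Z (e i) ω|} := by
    ext ω
    simp only [mem_setOf_eq, mem_iUnion]
    constructor
    · rintro ⟨t, htm, hlt⟩
      rcases eq_or_lt_of_le htm.2 with rfl | htT
      · have : t ∈ S := mem_insert _ _
        rw [he] at this
        obtain ⟨i, hi⟩ := this
        exact ⟨i, by rw [hi]; exact hlt⟩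
      · -- right continuity: find a rational slightly to the right
        have h1 : Tendsto (fun s => |Z s ω|) (𝓝[Ici t] t) (𝓝 |Z t ω|) :=
          (continuous_abs.tendsto _).comp (hrc ω t)
        have h2 : ∀ᶠ s in 𝓝[Ici t] t, lam < |Z s ω| := h1.eventually (lt_mem_nhds hlt)
        rw [eventually_nhdsWithin_iff, Metric.eventually_nhds_iff] at h2
        obtain ⟨δ, hδ, hball⟩ := h2
        obtain ⟨q, hq1, hq2⟩ := exists_rat_btwn (lt_min (lt_add_of_pos_right t hδ) htT)
        have hqS : (q : ℝ) ∈ S := by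
          refine mem_insert_of_mem _ ⟨⟨q, rfl⟩, ⟨le_trans htm.1 hq1.le, ?_⟩⟩
          exact le_of_lt (lt_of_lt_of_le hq2 (min_le_right _ _))
        rw [he] at hqS
        obtain ⟨i, hi⟩ := hqS
        refine ⟨i, ?_⟩
        rw [hi]
        have hdist : dist (q : ℝ) t < δ := by
          rw [Real.dist_eq, abs_of_pos (sub_pos.2 hq1)]
          have := lt_of_lt_of_le hq2 (min_le_left _ _)
          linarith
        exact hball hdist hq1.le
    · rintro ⟨i, hi⟩
      exact ⟨e i, heIcc i, hi⟩
  -- measurability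
  have hCmeas : ∀ i, MeasurableSet[ℱ (e i)] {ω | lam < |Z (e i) ω|} := fun i =>
    measurableSet_lt measurable_const (continuous_abs.measurable.comp (hZad (e i)))
  have hCmeas0 : ∀ i, MeasurableSet {ω | lam < |Z (e i) ω|} := fun i =>
    (ℱ.le (e i)) _ (hCmeas i)
  have hAmeas : MeasurableSet {ω | ∃ t ∈ Icc 0 T, lam < |Z t ω|} := by
    rw [hkey]; exact MeasurableSet.iUnion hCmeas0
  refine ⟨hAmeas, ?_⟩
  -- finite-stage hitting times
  set Am : ℕ → Set Ω := fun m => ⋃ i ∈ Finset.range m, {ω | lam < |Z (e i) ω|} with hAm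
  have hAmmeas : ∀ m, MeasurableSet (Am m) := fun m =>
    MeasurableSet.biUnion (Finset.range m).countable_toSet fun i _ => hCmeas0 i
  have hbound : ∀ m : ℕ, ENNReal.ofReal lam * μ (Am m) ≤ Dnorm 𝒬 ℱ T Z := by
    intro m
    set F : Ω → Finset ℕ := fun ω => (Finset.range m).filter (fun i => lam < |Z (e i) ω|)
      with hF
    set τm : Ω → ℝ := fun ω =>
      if h : (F ω).Nonempty then ((F ω).image e).min' (h.image e) else T with hτm
    have hτmem : ∀ ω, τm ω ∈ Icc 0 T := by
      intro ω
      by_cases h : (F ω).Nonempty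
      · simp only [hτm, dif_pos h]
        have hmm := ((F ω).image e).min'_mem (h.image e)
        rw [Finset.mem_image] at hmm
        obtain ⟨i, _, hie⟩ := hmm
        rw [← hie]; exact heIcc i
      · simp only [hτm, dif_neg h]
        exact ⟨hT, le_refl T⟩
    have hexceed : ∀ ω ∈ Am m, lam < |Z (τm ω) ω| := by
      intro ω hω
      rw [hAm] at hω
      simp only [Finset.mem_coe, mem_iUnion, mem_setOf_eq, Finset.mem_range] at hω
      obtain ⟨i, hi, hlt⟩ := hω
      have hFne : (F ω).Nonempty :=
        ⟨i, Finset.mem_filter.2 ⟨Finset.mem_range.2 hi, hlt⟩⟩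
      simp only [hτm, dif_pos hFne]
      have hmm := ((F ω).image e).min'_mem (hFne.image e)
      rw [Finset.mem_image] at hmm
      obtain ⟨j, hj, hje⟩ := hmm
      rw [← hje]
      exact (Finset.mem_filter.1 hj).2
    have hstop : IsStoppingTime ℱ (fun ω => (τm ω : WithTop ℝ)) := by
      intro s
      simp only [WithTop.coe_le_coe]
      by_cases hs : T ≤ s
      · have : {ω | τm ω ≤ s} = univ :=
          eq_univ_of_forall fun ω => le_trans (hτmem ω).2 hs
        rw [this]; exact MeasurableSet.univ
      · have hset : {ω | τm ω ≤ s} =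
            ⋃ i, ⋃ (_ : i ∈ Finset.range m ∧ e i ≤ s), {ω | lam < |Z (e i) ω|} := by
          ext ω
          simp only [mem_setOf_eq, mem_iUnion]
          constructor
          · intro hle
            simp only [hτm] at hle
            by_cases hFne : (F ω).Nonempty
            · simp only [dif_pos hFne] at hle
              have hmm := ((F ω).image e).min'_mem (hFne.image e)
              rw [Finset.mem_image] at hmm
              obtain ⟨i, hi, hie⟩ := hmm
              have hi' := Finset.mem_filter.1 hi
              exact ⟨i, ⟨hi'.1, by rw [hie]; exact hle⟩, hi'.2⟩
            · simp only [dif_neg hFne] at hle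
              exact absurd hle hs
          · rintro ⟨i, ⟨him, hies⟩, hlt⟩
            have hFne : (F ω).Nonempty := ⟨i, Finset.mem_filter.2 ⟨him, hlt⟩⟩
            simp only [hτm, dif_pos hFne]
            refine le_trans (Finset.min'_le _ (e i) ?_) hies
            exact Finset.mem_image_of_mem e (Finset.mem_filter.2 ⟨him, hlt⟩)
        rw [hset]
        refine MeasurableSet.iUnion fun i => MeasurableSet.iUnion fun hi =>
          ℱ.mono hi.2 _ (hCmeas i)
    calc ENNReal.ofReal lam * μ (Am m)
        = ∫⁻ _ in Am m, ENNReal.ofReal lam ∂μ := by rw [setLIntegral_const]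
      _ ≤ ∫⁻ ω in Am m, ENNReal.ofReal |Z (τm ω) ω| ∂μ :=
          setLIntegral_mono' (hAmmeas m) fun ω hω =>
            ENNReal.ofReal_le_ofReal (hexceed ω hω).le
      _ ≤ ∫⁻ ω, ENNReal.ofReal |Z (τm ω) ω| ∂μ :=
          lintegral_mono' Measure.restrict_le_self le_rfl
      _ ≤ Dnorm 𝒬 ℱ T Z := le_Dnorm ⟨τm, hstop, hτmem⟩ hμ𝒬 Z
  -- pass to the limit in m
  have hmono : Monotone Am := by
    intro a b hab
    apply iUnion₂_subset
    intro i hi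
    exact subset_iUnion₂ (s := fun i (_ : i ∈ Finset.range b) => {ω | lam < |Z (e i) ω|}) i
      (Finset.mem_range.2 (lt_of_lt_of_le (Finset.mem_range.1 hi) hab))
  have hAa : {ω | ∃ t ∈ Icc 0 T, lam < |Z t ω|} = ⋃ m, Am m := by
    rw [hkey, hAm]
    ext ω
    simp only [mem_iUnion, Finset.mem_range, mem_setOf_eq]
    constructor
    · rintro ⟨i, hi⟩; exact ⟨i + 1, i, lt_add_one i, hi⟩
    · rintro ⟨m, i, _, hi⟩; exact ⟨i, hi⟩
  rw [hAa, hmono.measure_iUnion, ENNReal.mul_iSup]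
  exact iSup_le hbound

lemma Dnorm_le {𝒬 : Set (Measure Ω)} {ℱ : Filtration ℝ m0} {T : ℝ} {Z : ℝ → Ω → ℝ} {a : ℝ≥0∞}
    (h : ∀ (τ : STimes ℱ T) (Q : Measure Ω), Q ∈ 𝒬 →
      ∫⁻ ω, ENNReal.ofReal |Z (τ.1 ω) ω| ∂Q ≤ a) : Dnorm 𝒬 ℱ T Z ≤ a :=
  iSup_le fun τ => iSup_le fun Q => iSup_le fun hQ => h τ Q hQ

end Maximal

/-- **Theorem A.2.** The space `𝒟` of adapted càdlàg processes which are uniformly integrable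
under the family `𝒬` and have finite norm `‖·‖_𝒟` is complete: every Cauchy sequence in
`‖·‖_𝒟` admits a limit in `𝒟`. -/
theorem classD_complete
    (μ : Measure Ω) [IsProbabilityMeasure μ]
    (ℱ : Filtration ℝ m0) (T : ℝ) (hT : 0 < T)
    (hcomplete : ∀ t, ∀ s : Set Ω, μ s = 0 → MeasurableSet[ℱ t] s)
    (𝒬 : Set (Measure Ω)) (hμ𝒬 : μ ∈ 𝒬)
    (hprob : ∀ Q ∈ 𝒬, IsProbabilityMeasure Q)
    (hequiv : ∀ Q ∈ 𝒬, Q ≪ μ ∧ μ ≪ Q)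
    (Yseq : ℕ → ℝ → Ω → ℝ)
    (hadapted : ∀ n, Adapted ℱ (Yseq n))
    (hcadlag : ∀ n, IsCadlag (Yseq n))
    (hnorm : ∀ n, Dnorm 𝒬 ℱ T (Yseq n) < ⊤)
    (hUI : ∀ n, DUnifIntegrable 𝒬 ℱ T (Yseq n))
    (hCauchy : ∀ ε : ℝ≥0∞, 0 < ε → ∃ N : ℕ, ∀ m n, N ≤ m → N ≤ n →
      Dnorm 𝒬 ℱ T (fun t ω => Yseq m t ω - Yseq n t ω) < ε) :
    ∃ Y : ℝ → Ω → ℝ, Adapted ℱ Y ∧ IsCadlag Y ∧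
      Dnorm 𝒬 ℱ T Y < ⊤ ∧ DUnifIntegrable 𝒬 ℱ T Y ∧
      Tendsto (fun n => Dnorm 𝒬 ℱ T (fun t ω => Yseq n t ω - Y t ω)) atTop (nhds 0) := by
  classical
  have hT0 : (0:ℝ) ≤ T := hT.le
  have hrcseq : ∀ n ω t, ContinuousWithinAt (fun s => Yseq n s ω) (Ici t) t :=
    fun n ω t => ((hcadlag n) ω).1 t
  have hmeasseq : ∀ n t, Measurable (Yseq n t) := fun n t =>
    (hadapted n t).mono (ℱ.le t) le_rfl
  have hτmeas : ∀ τ : STimes ℱ T, Measurable τ.1 := fun τ =>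
    measurable_of_Iic fun t => (ℱ.le t) _ (by have h := τ.2.1 t; simp only [WithTop.coe_le_coe] at h; exact h)
  have hstopseq : ∀ (n : ℕ) (τ : STimes ℱ T), Measurable fun ω => Yseq n (τ.1 ω) ω :=
    fun n τ => meas_stopped' _ (hmeasseq n) (hrcseq n) _ (hτmeas τ)
  -- choice of the subsequence
  have hpow8 : ∀ k : ℕ, (0:ℝ≥0∞) < ENNReal.ofReal ((8⁻¹:ℝ) ^ k) := fun k =>
    ENNReal.ofReal_pos.2 (pow_pos (by norm_num) k)
  choose Nc hNc using fun k => hCauchy (ENNReal.ofReal ((8⁻¹:ℝ) ^ k)) (hpow8 k)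
  set φ : ℕ → ℕ := fun k => k + (Finset.range (k+1)).sum Nc with hφ
  have hφmono : Monotone φ := by
    apply monotone_nat_of_le_succ
    intro k
    have h1 : (Finset.range (k+1)).sum Nc ≤ (Finset.range (k+1+1)).sum Nc :=
      Finset.sum_le_sum_of_subset (Finset.range_subset_range.2 (Nat.le_succ _))
    simp only [hφ]
    omega
  have hφge : ∀ k, k ≤ φ k := fun k => Nat.le_add_right _ _
  have hφN : ∀ k, Nc k ≤ φ k := by
    intro k
    have h1 : Nc k ≤ (Finset.range (k+1)).sum Nc :=
      Finset.single_le_sum (fun i _ => Nat.zero_le _) (Finset.self_mem_range_succ k)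
    simp only [hφ]; omega
  have hdiff : ∀ k, Dnorm 𝒬 ℱ T
      (fun t ω => Yseq (φ (k+1)) t ω - Yseq (φ k) t ω) < ENNReal.ofReal ((8⁻¹:ℝ) ^ k) :=
    fun k => hNc k (φ (k+1)) (φ k) ((hφN k).trans (hφmono (Nat.le_succ k))) (hφN k)
  -- bad sets and Borel–Cantelli
  set Bs : ℕ → Set Ω := fun k =>
    {ω | ∃ t ∈ Icc 0 T, (2⁻¹:ℝ)^k < |Yseq (φ (k+1)) t ω - Yseq (φ k) t ω|} with hBs
  have hmax : ∀ k, MeasurableSet (Bs k) ∧ ENNReal.ofReal ((2⁻¹:ℝ)^k) * μ (Bs k) ≤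
      Dnorm 𝒬 ℱ T (fun t ω => Yseq (φ (k+1)) t ω - Yseq (φ k) t ω) := fun k =>
    maximal_ineq hT0 hμ𝒬 _ (fun t => ((hadapted _ t).sub (hadapted _ t)))
      (fun ω t => ((hrcseq _ ω t).sub (hrcseq _ ω t))) (pow_pos (by norm_num) k)
  have hBle : ∀ k, μ (Bs k) ≤ ENNReal.ofReal ((4⁻¹:ℝ)^k) := by
    intro k
    have h1 := le_trans (hmax k).2 (hdiff k).le
    have h8 : ENNReal.ofReal ((8⁻¹:ℝ)^k) =
        ENNReal.ofReal ((2⁻¹:ℝ)^k) * ENNReal.ofReal ((4⁻¹:ℝ)^k) := by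
      rw [← ENNReal.ofReal_mul (by positivity)]
      congr 1
      rw [← mul_pow]; norm_num
    rw [h8] at h1
    exact (ENNReal.mul_le_mul_iff_right (ne_of_gt (ENNReal.ofReal_pos.2 (by positivity)))
      ENNReal.ofReal_ne_top).1 h1
  have htsum : ∑' k, μ (Bs k) ≠ ⊤ := by
    refine ne_top_of_le_ne_top ?_ (ENNReal.tsum_le_tsum hBle)
    have heq : ∀ k:ℕ, ENNReal.ofReal ((4⁻¹:ℝ)^k) = (ENNReal.ofReal 4⁻¹)^k := fun k =>
      ENNReal.ofReal_pow (by norm_num) k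
    simp only [heq]
    rw [ENNReal.tsum_geometric]
    refine ENNReal.inv_ne_top.2 ?_
    rw [ne_eq, tsub_eq_zero_iff_le, not_le]
    exact ENNReal.ofReal_lt_one.2 (by norm_num)
  set Binf := limsup Bs atTop with hBinf
  have hB0 : μ Binf = 0 := measure_limsup_atTop_eq_zero htsum
  have hQB0 : ∀ Q ∈ 𝒬, Q Binf = 0 := fun Q hQ => (hequiv Q hQ).1 hB0
  have hgood : ∀ ω, ω ∉ Binf → ∃ K, ∀ k, K ≤ k → ∀ t ∈ Icc 0 T,
      |Yseq (φ (k+1)) t ω - Yseq (φ k) t ω| ≤ (2⁻¹:ℝ)^k := by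
    intro ω hω
    have h1 : ∀ᶠ k in atTop, ω ∉ Bs k := by
      by_contra hcon
      rw [Filter.not_eventually] at hcon
      refine hω ?_
      rw [hBinf, Filter.mem_limsup_iff_frequently_mem]
      exact hcon.mono fun k hk => not_not.1 hk
    obtain ⟨K, hK⟩ := eventually_atTop.1 h1
    refine ⟨K, fun k hk t ht => ?_⟩
    by_contra hlt
    exact hK k hk ⟨t, ht, lt_of_not_ge hlt⟩
  -- the limit process
  set L : ℝ → Ω → ℝ := fun s ω =>
    if h : ∃ l, Tendsto (fun k => Yseq (φ k) s ω) atTop (𝓝 l) then h.choose else 0 with hL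
  set Y : ℝ → Ω → ℝ := fun t =>
    Binf.piecewise (fun _ => 0) (fun ω => if t < 0 then 0 else L (min t T) ω) with hYdef
  have hLspec : ∀ s ω, (∃ l, Tendsto (fun k => Yseq (φ k) s ω) atTop (𝓝 l)) →
      Tendsto (fun k => Yseq (φ k) s ω) atTop (𝓝 (L s ω)) := by
    intro s ω h
    simp only [hL, dif_pos h]
    exact h.choose_spec
  have hYpath0 : ∀ ω ∈ Binf, ∀ t, Y t ω = 0 := fun ω hω t => by
    simp only [hYdef, Set.piecewise_eq_of_mem _ _ _ hω]
  have hYneg : ∀ ω, ∀ t : ℝ, t < 0 → Y t ω = 0 := by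
    intro ω t ht
    by_cases hω : ω ∈ Binf
    · exact hYpath0 ω hω t
    · simp only [hYdef, Set.piecewise_eq_of_notMem _ _ _ hω, if_pos ht]
  have hYge : ∀ ω, ω ∉ Binf → ∀ t : ℝ, 0 ≤ t → Y t ω = L (min t T) ω := by
    intro ω hω t ht
    simp only [hYdef, Set.piecewise_eq_of_notMem _ _ _ hω, if_neg (not_lt.2 ht)]
  have hYeq : ∀ ω, ω ∉ Binf → ∀ t, t ∈ Icc (0:ℝ) T → Y t ω = L t ω := by
    intro ω hω t ht
    rw [hYge ω hω t ht.1, min_eq_left ht.2]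
  have hYgeT : ∀ ω, ∀ t : ℝ, T ≤ t → Y t ω = Y T ω := by
    intro ω t ht
    by_cases hω : ω ∈ Binf
    · rw [hYpath0 ω hω, hYpath0 ω hω]
    · rw [hYge ω hω t (le_trans hT0 ht), hYge ω hω T hT0, min_eq_right ht, min_self]
  have hYconv : ∀ ω, ω ∉ Binf → ∀ t, t ∈ Icc (0:ℝ) T →
      Tendsto (fun k => Yseq (φ k) t ω) atTop (𝓝 (Y t ω)) := by
    intro ω hω t ht
    obtain ⟨K, hK⟩ := hgood ω hω
    have hex : ∃ l, Tendsto (fun k => Yseq (φ k) t ω) atTop (𝓝 l) :=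
      exists_tendsto_of_tail' (fun k hk => hK k hk t ht)
    rw [hYeq ω hω t ht]
    exact hLspec t ω hex
  -- uniform approximation on good paths
  have hunif : ∀ ω, ω ∉ Binf → ∃ K, ∀ j, K ≤ j → ∀ t ∈ Icc (0:ℝ) T,
      |Y t ω - Yseq (φ j) t ω| ≤ 4 * (2⁻¹:ℝ)^j := by
    intro ω hω
    obtain ⟨K, hK⟩ := hgood ω hω
    refine ⟨K, fun j hj t ht => ?_⟩
    have hstep : ∀ m, j ≤ m →
        |Yseq (φ m) t ω - Yseq (φ j) t ω| ≤ 2 * (2⁻¹:ℝ)^j - 2 * 2⁻¹^m := by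
      intro m hm
      induction m, hm using Nat.le_induction with
      | base => simp
      | succ m hm ih =>
        have h1 := hK m (le_trans hj hm) t ht
        have h2 := abs_sub_le (Yseq (φ (m+1)) t ω) (Yseq (φ m) t ω) (Yseq (φ j) t ω)
        have h3 : 2 * (2⁻¹:ℝ)^(m+1) = 2⁻¹^m := by rw [pow_succ]; ring
        linarith
    have hlim : Tendsto (fun m => |Yseq (φ m) t ω - Yseq (φ j) t ω|) atTop
        (𝓝 |Y t ω - Yseq (φ j) t ω|) :=
      (continuous_abs.tendsto _).comp ((hYconv ω hω t ht).sub tendsto_const_nhds)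
    have hple : ∀ m : ℕ, (0:ℝ) ≤ 2⁻¹^m := fun m => by positivity
    have hb : |Y t ω - Yseq (φ j) t ω| ≤ 2 * (2⁻¹:ℝ)^j :=
      le_of_tendsto hlim (eventually_atTop.2 ⟨j, fun m hm =>
        le_trans (hstep m hm) (by linarith [hple m])⟩)
    linarith [hple j]
  -- right-continuity within [t, T]
  have hrcIcc : ∀ ω, ω ∉ Binf → ∀ t, t ∈ Icc (0:ℝ) T →
      ContinuousWithinAt (fun s => Y s ω) (Icc t T) t := by
    intro ω hω t ht
    obtain ⟨K, hK⟩ := hunif ω hω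
    rw [Metric.continuousWithinAt_iff]
    intro ε hε
    obtain ⟨j, hjK, hjε⟩ : ∃ j, K ≤ j ∧ 4 * (2⁻¹:ℝ)^j < ε / 3 := by
      obtain ⟨j0, hj0⟩ := exists_pow_lt_of_lt_one (show (0:ℝ) < ε/3/4 by positivity)
        (show (2⁻¹:ℝ) < 1 by norm_num)
      refine ⟨max K j0, le_max_left _ _, ?_⟩
      have h1 : (2⁻¹:ℝ) ^ max K j0 ≤ 2⁻¹ ^ j0 :=
        pow_le_pow_of_le_one (by norm_num) (by norm_num) (le_max_right _ _)
      have h2 : (0:ℝ) < ε/3/4 := by positivity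
      nlinarith
    have hfj := hrcseq (φ j) ω t
    rw [Metric.continuousWithinAt_iff] at hfj
    obtain ⟨δ, hδ, hfj⟩ := hfj (ε/3) (by positivity)
    refine ⟨δ, hδ, fun s hs hds => ?_⟩
    have hsI : s ∈ Icc (0:ℝ) T := ⟨le_trans ht.1 hs.1, hs.2⟩
    have h1 := hK j hjK s hsI
    have h2 := hK j hjK t ht
    have h3 := hfj (mem_of_mem_of_subset hs Icc_subset_Ici_self) hds
    rw [Real.dist_eq] at h3 ⊢
    rw [abs_sub_comm] at h2
    have k1 := abs_sub_le (Y s ω) (Yseq (φ j) s ω) (Y t ω)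
    have k2 := abs_sub_le (Yseq (φ j) s ω) (Yseq (φ j) t ω) (Y t ω)
    linarith
  -- right-continuity everywhere
  have hrcY : ∀ ω t, ContinuousWithinAt (fun s => Y s ω) (Ici t) t := by
    intro ω t
    by_cases hω : ω ∈ Binf
    · have hconst : (fun s => Y s ω) = fun _ => (0:ℝ) := funext fun s => hYpath0 ω hω s
      rw [hconst]; exact continuousWithinAt_const
    rcases lt_or_ge t 0 with ht | ht
    · refine continuousWithinAt_const.congr_of_eventuallyEq ?_ (hYneg ω t ht)
      filter_upwards [mem_nhdsWithin_of_mem_nhds (Iio_mem_nhds ht)] with s hs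
      exact hYneg ω s hs
    rcases le_or_gt T t with htT | htT
    · exact continuousWithinAt_const.congr
        (fun y hy => hYgeT ω y (le_trans htT hy)) (hYgeT ω t htT)
    · have hbase := hrcIcc ω hω t ⟨ht, htT.le⟩
      refine hbase.mono_of_mem_nhdsWithin ?_
      rw [mem_nhdsWithin]
      exact ⟨Iio T, isOpen_Iio, htT, fun s hs => ⟨hs.2, hs.1.le⟩⟩
  -- left limits everywhere
  have hllY : ∀ ω t, ∃ l : ℝ, Tendsto (fun s => Y s ω) (𝓝[<] t) (𝓝 l) := by
    intro ω t
    by_cases hω : ω ∈ Binf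
    · refine ⟨0, Tendsto.congr' ?_ tendsto_const_nhds⟩
      exact Eventually.of_forall fun s => (hYpath0 ω hω s).symm
    rcases le_or_gt t 0 with ht | ht
    · refine ⟨0, Tendsto.congr' ?_ tendsto_const_nhds⟩
      filter_upwards [self_mem_nhdsWithin] with s hs
      exact (hYneg ω s (lt_of_lt_of_le hs ht)).symm
    rcases lt_or_ge T t with htT | htT
    · refine ⟨Y T ω, Tendsto.congr' ?_ tendsto_const_nhds⟩
      filter_upwards [mem_nhdsWithin_of_mem_nhds (Ioi_mem_nhds htT)] with s hs
      exact (hYgeT ω s hs.le).symm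
    · -- 0 < t ≤ T
      obtain ⟨K, hK⟩ := hunif ω hω
      set l : ℕ → ℝ := fun j => (((hcadlag (φ j)) ω).2 t).choose with hldef
      have hlj : ∀ j, Tendsto (fun s => Yseq (φ j) s ω) (𝓝[<] t) (𝓝 (l j)) :=
        fun j => (((hcadlag (φ j)) ω).2 t).choose_spec
      have hev : ∀ᶠ s in 𝓝[<] t, s ∈ Icc (0:ℝ) T := by
        filter_upwards [mem_nhdsWithin_of_mem_nhds (Ioi_mem_nhds ht), self_mem_nhdsWithin]
          with s hs1 hs2
        exact ⟨le_of_lt hs1, le_trans (le_of_lt hs2) htT⟩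
      have hlb : ∀ i j, K ≤ i → K ≤ j → |l i - l j| ≤ 4 * (2⁻¹:ℝ)^i + 4 * 2⁻¹^j := by
        intro i j hi hj
        have htd : Tendsto (fun s => |Yseq (φ i) s ω - Yseq (φ j) s ω|) (𝓝[<] t)
            (𝓝 |l i - l j|) := (continuous_abs.tendsto _).comp ((hlj i).sub (hlj j))
        refine le_of_tendsto htd ?_
        filter_upwards [hev] with s hs
        have h1 := hK i hi s hs
        have h2 := hK j hj s hs
        have h3 := abs_sub_le (Yseq (φ i) s ω) (Y s ω) (Yseq (φ j) s ω)
        rw [abs_sub_comm] at h1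
        linarith
      have hlc : CauchySeq l := by
        rw [Metric.cauchySeq_iff']
        intro ε hε
        obtain ⟨j0, hj0⟩ := exists_pow_lt_of_lt_one (show (0:ℝ) < ε/8 by positivity)
          (show (2⁻¹:ℝ) < 1 by norm_num)
        refine ⟨max K j0, fun n hn => ?_⟩
        rw [Real.dist_eq]
        have h1 := hlb n (max K j0) (le_trans (le_max_left _ _) hn) (le_max_left _ _)
        have hpn : (2⁻¹:ℝ)^n ≤ 2⁻¹^j0 :=
          pow_le_pow_of_le_one (by norm_num) (by norm_num) (le_trans (le_max_right _ _) hn)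
        have hpm : (2⁻¹:ℝ)^(max K j0) ≤ 2⁻¹^j0 :=
          pow_le_pow_of_le_one (by norm_num) (by norm_num) (le_max_right _ _)
        linarith
      obtain ⟨lim, hlim⟩ := cauchySeq_tendsto_of_complete hlc
      refine ⟨lim, ?_⟩
      rw [Metric.tendsto_nhds]
      intro ε hε
      obtain ⟨j0, hj0⟩ := exists_pow_lt_of_lt_one (show (0:ℝ) < ε/3/4 by positivity)
        (show (2⁻¹:ℝ) < 1 by norm_num)
      obtain ⟨j1, hj1⟩ := Metric.tendsto_atTop.1 hlim (ε/3) (by positivity)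
      set j := max (max K j0) j1 with hjdef
      have hjK : K ≤ j := le_trans (le_max_left _ _) (le_max_left _ _)
      have hjj0 : j0 ≤ j := le_trans (le_max_right _ _) (le_max_left _ _)
      have hjj1 : j1 ≤ j := le_max_right _ _
      have hpj : (2⁻¹:ℝ)^j ≤ 2⁻¹^j0 :=
        pow_le_pow_of_le_one (by norm_num) (by norm_num) hjj0
      have hd1 := hj1 j hjj1
      rw [Real.dist_eq] at hd1
      filter_upwards [hev, (hlj j) (Metric.ball_mem_nhds _ (show (0:ℝ) < ε/3 by positivity))]
        with s hs hball
      rw [Set.mem_preimage, Metric.mem_ball, Real.dist_eq] at hball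
      have h1 := hK j hjK s hs
      rw [Real.dist_eq]
      have k1 := abs_sub_le (Y s ω) (Yseq (φ j) s ω) lim
      have k2 := abs_sub_le (Yseq (φ j) s ω) (l j) lim
      nlinarith
  have hYcadlag : IsCadlag Y := fun ω => ⟨hrcY ω, hllY ω⟩
  -- adaptedness
  have hYad : Adapted ℱ Y := by
    intro t
    rcases lt_or_ge t 0 with ht | ht
    · have hconst : Y t = fun _ => (0:ℝ) := funext fun ω => hYneg ω t ht
      rw [hconst]; exact measurable_const
    · set c := min t T with hc
      have hcmeas : ∀ k : ℕ, Measurable[ℱ c] (Yseq (φ k) c) := fun k =>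
        (hadapted (φ k) c)
      have hV : Measurable[ℱ c] (L c) := by
        letI : MeasurableSpace Ω := ℱ c
        have hCset : MeasurableSet
            {ω | ∃ li, Tendsto (fun k => Yseq (φ k) c ω) atTop (𝓝 li)} :=
          measurableSet_exists_tendsto hcmeas
        apply measurable_of_tendsto_metrizable
          (f := fun k => Set.indicator
            {ω | ∃ li, Tendsto (fun k => Yseq (φ k) c ω) atTop (𝓝 li)} (Yseq (φ k) c))
          (fun k => (hcmeas k).indicator hCset)
        rw [tendsto_pi_nhds]
        intro ω
        by_cases hex : ∃ li, Tendsto (fun k => Yseq (φ k) c ω) atTop (𝓝 li)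
        · have he1 : ∀ k : ℕ, Set.indicator
              {ω | ∃ li, Tendsto (fun k => Yseq (φ k) c ω) atTop (𝓝 li)}
              (Yseq (φ k) c) ω = Yseq (φ k) c ω :=
            fun k => Set.indicator_of_mem (show ω ∈ {ω | ∃ li, Tendsto (fun k => Yseq (φ k) c ω) atTop (𝓝 li)} from hex) _
          simp only [he1]
          exact hLspec c ω hex
        · have he1 : ∀ k : ℕ, Set.indicator
              {ω | ∃ li, Tendsto (fun k => Yseq (φ k) c ω) atTop (𝓝 li)}
              (Yseq (φ k) c) ω = 0 :=
            fun k => Set.indicator_of_notMem (show ω ∉ {ω | ∃ li, Tendsto (fun k => Yseq (φ k) c ω) atTop (𝓝 li)} from hex) _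
          simp only [he1, hL, dif_neg hex]
          exact tendsto_const_nhds
      have hBt : MeasurableSet[ℱ t] Binf := hcomplete t Binf hB0
      have hcle : ℱ c ≤ ℱ t := ℱ.mono (min_le_left t T)
      have hYt : Y t = Binf.piecewise (fun _ => (0:ℝ)) (L c) := by
        funext ω
        by_cases hω : ω ∈ Binf
        · rw [hYpath0 ω hω, Set.piecewise_eq_of_mem _ _ _ hω]
        · rw [hYge ω hω t ht, Set.piecewise_eq_of_notMem _ _ _ hω]
      rw [hYt]
      exact (Measurable.piecewise hBt measurable_const (hV.mono hcle le_rfl))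
  have hYmeas0 : ∀ t, Measurable (Y t) := fun t =>
    (hYad t).mono (ℱ.le t) le_rfl
  have hstopY : ∀ τ : STimes ℱ T, Measurable fun ω => Y (τ.1 ω) ω :=
    fun τ => meas_stopped' _ hYmeas0 (fun ω t => (hYcadlag ω).1 t) _ (hτmeas τ)
  have hτconv : ∀ ω, ω ∉ Binf → ∀ τ : STimes ℱ T,
      Tendsto (fun k => Yseq (φ k) (τ.1 ω) ω) atTop (𝓝 (Y (τ.1 ω) ω)) :=
    fun ω hω τ => hYconv ω hω _ (τ.2.2 ω)
  -- Fatou bound at each stopping time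
  have hae_lim : ∀ (n : ℕ) (τ : STimes ℱ T) (Q : Measure Ω), Q ∈ 𝒬 →
      ∫⁻ ω, ENNReal.ofReal |Yseq n (τ.1 ω) ω - Y (τ.1 ω) ω| ∂Q ≤
        liminf (fun j => Dnorm 𝒬 ℱ T (fun t ω => Yseq n t ω - Yseq (φ j) t ω)) atTop := by
    intro n τ Q hQ
    have hmeasj : ∀ j : ℕ, Measurable fun ω =>
        ENNReal.ofReal |Yseq n (τ.1 ω) ω - Yseq (φ j) (τ.1 ω) ω| := fun j =>
      (continuous_abs.measurable.comp ((hstopseq n τ).sub (hstopseq (φ j) τ))).ennreal_ofReal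
    have hptw : ∀ ω, ω ∉ Binf →
        ENNReal.ofReal |Yseq n (τ.1 ω) ω - Y (τ.1 ω) ω| =
        liminf (fun j => ENNReal.ofReal |Yseq n (τ.1 ω) ω - Yseq (φ j) (τ.1 ω) ω|) atTop := by
      intro ω hω
      have h1 : Tendsto (fun j => ENNReal.ofReal |Yseq n (τ.1 ω) ω - Yseq (φ j) (τ.1 ω) ω|)
          atTop (𝓝 (ENNReal.ofReal |Yseq n (τ.1 ω) ω - Y (τ.1 ω) ω|)) := by
        apply (ENNReal.continuous_ofReal.tendsto _).comp
        exact (continuous_abs.tendsto _).comp (tendsto_const_nhds.sub (hτconv ω hω τ))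
      exact h1.liminf_eq.symm
    have hcong : ∫⁻ ω, ENNReal.ofReal |Yseq n (τ.1 ω) ω - Y (τ.1 ω) ω| ∂Q =
        ∫⁻ ω, liminf (fun j =>
          ENNReal.ofReal |Yseq n (τ.1 ω) ω - Yseq (φ j) (τ.1 ω) ω|) atTop ∂Q := by
      apply lintegral_congr_ae
      rw [Filter.EventuallyEq, ae_iff]
      refine measure_mono_null (fun ω hω => ?_) (hQB0 Q hQ)
      simp only [mem_setOf_eq] at hω
      by_contra hB
      exact hω (hptw ω hB)
    rw [hcong]
    refine le_trans (lintegral_liminf_le hmeasj) ?_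
    refine liminf_le_liminf ?_
    exact Eventually.of_forall fun j => le_Dnorm τ hQ _
  -- main norm convergence estimate
  have hconv_le : ∀ ε : ℝ≥0∞, 0 < ε → ∃ N0 : ℕ, ∀ n, N0 ≤ n →
      Dnorm 𝒬 ℱ T (fun t ω => Yseq n t ω - Y t ω) ≤ ε := by
    intro ε hε
    obtain ⟨N0, hN0⟩ := hCauchy ε hε
    refine ⟨N0, fun n hn => ?_⟩
    refine Dnorm_le fun τ Q hQ => ?_
    refine le_trans (hae_lim n τ Q hQ) ?_
    refine Filter.liminf_le_of_frequently_le' ?_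
    refine Eventually.frequently ?_
    rw [eventually_atTop]
    exact ⟨N0, fun j hj => (hN0 n (φ j) hn (le_trans hj (hφge j))).le⟩
  refine ⟨Y, hYad, hYcadlag, ?_, ?_, ?_⟩
  · -- finite norm
    obtain ⟨N1, hN1⟩ := hconv_le 1 zero_lt_one
    have hb : Dnorm 𝒬 ℱ T Y ≤ 1 + Dnorm 𝒬 ℱ T (Yseq N1) := by
      refine Dnorm_le fun τ Q hQ => ?_
      have hm1 : Measurable fun ω => ENNReal.ofReal |Yseq N1 (τ.1 ω) ω - Y (τ.1 ω) ω| :=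
        (continuous_abs.measurable.comp ((hstopseq N1 τ).sub (hstopY τ))).ennreal_ofReal
      calc ∫⁻ ω, ENNReal.ofReal |Y (τ.1 ω) ω| ∂Q
          ≤ ∫⁻ ω, (ENNReal.ofReal |Yseq N1 (τ.1 ω) ω - Y (τ.1 ω) ω|
              + ENNReal.ofReal |Yseq N1 (τ.1 ω) ω|) ∂Q := by
            refine lintegral_mono fun ω => ?_
            rw [← ENNReal.ofReal_add (abs_nonneg _) (abs_nonneg _)]
            refine ENNReal.ofReal_le_ofReal ?_
            have := abs_sub_abs_le_abs_sub (Y (τ.1 ω) ω) (Yseq N1 (τ.1 ω) ω)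
            rw [abs_sub_comm (Y (τ.1 ω) ω)] at this
            linarith [abs_nonneg (Yseq N1 (τ.1 ω) ω)]
        _ = (∫⁻ ω, ENNReal.ofReal |Yseq N1 (τ.1 ω) ω - Y (τ.1 ω) ω| ∂Q)
              + ∫⁻ ω, ENNReal.ofReal |Yseq N1 (τ.1 ω) ω| ∂Q := lintegral_add_left hm1 _
        _ ≤ Dnorm 𝒬 ℱ T (fun t ω => Yseq N1 t ω - Y t ω) + Dnorm 𝒬 ℱ T (Yseq N1) :=
            add_le_add (le_Dnorm τ hQ _) (le_Dnorm τ hQ _)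
        _ ≤ 1 + Dnorm 𝒬 ℱ T (Yseq N1) := add_le_add (hN1 N1 le_rfl) le_rfl
    exact lt_of_le_of_lt hb (ENNReal.add_lt_top.2 ⟨ENNReal.one_lt_top, hnorm N1⟩)
  · -- uniform integrability
    show Tendsto
      (fun N : ℝ => ⨆ τ : STimes ℱ T, ⨆ Q ∈ 𝒬,
        ∫⁻ ω in {ω | N ≤ |Y (τ.1 ω) ω|}, ENNReal.ofReal |Y (τ.1 ω) ω| ∂Q)
      atTop (nhds 0)
    rw [ENNReal.tendsto_nhds_zero]
    intro ε hε
    set ε' := min ε 1 with hε'def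
    have hε'pos : 0 < ε' := lt_min hε zero_lt_one
    have hε'top : ε' ≠ ⊤ := ne_of_lt (lt_of_le_of_lt (min_le_right _ _) ENNReal.one_lt_top)
    set ε8 := ε' / 8 with hε8def
    have hε8pos : 0 < ε8 := ENNReal.div_pos hε'pos.ne' (by norm_num)
    obtain ⟨n, hn⟩ := hconv_le ε8 hε8pos
    have hDn : Dnorm 𝒬 ℱ T (fun t ω => Yseq n t ω - Y t ω) ≤ ε8 := hn n le_rfl
    have hUIn : Tendsto
        (fun N : ℝ => ⨆ τ : STimes ℱ T, ⨆ Q ∈ 𝒬,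
          ∫⁻ ω in {ω | N ≤ |Yseq n (τ.1 ω) ω|}, ENNReal.ofReal |Yseq n (τ.1 ω) ω| ∂Q)
        atTop (nhds 0) := hUI n
    have hUIn' := ENNReal.tendsto_nhds_zero.1 hUIn ε8 hε8pos
    obtain ⟨M0, hM0⟩ := eventually_atTop.1 hUIn'
    set M := max M0 0 with hMdef
    have hM0' : (0:ℝ) ≤ M := le_max_right _ _
    have hMle : (⨆ τ : STimes ℱ T, ⨆ Q ∈ 𝒬,
        ∫⁻ ω in {ω | M ≤ |Yseq n (τ.1 ω) ω|}, ENNReal.ofReal |Yseq n (τ.1 ω) ω| ∂Q) ≤ ε8 :=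
      hM0 M (le_max_left _ _)
    have hNdiv : Tendsto (fun N : ℝ => N / 2) atTop atTop :=
      Tendsto.atTop_div_const (by norm_num) tendsto_id
    filter_upwards [hNdiv.eventually hUIn', eventually_ge_atTop (2*M), eventually_gt_atTop 0]
      with N hN1 hN2 hN3
    refine le_trans ?_ (min_le_left ε 1)
    refine iSup_le fun τ => iSup_le fun Q => iSup_le fun hQ => ?_
    -- fixed stopping time and measure
    have hWm : Measurable fun ω => Yseq n (τ.1 ω) ω := hstopseq n τ
    have hYYm : Measurable fun ω => Y (τ.1 ω) ω := hstopY τ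
    have hDm : Measurable fun ω => ENNReal.ofReal |Yseq n (τ.1 ω) ω - Y (τ.1 ω) ω| :=
      (continuous_abs.measurable.comp (hWm.sub hYYm)).ennreal_ofReal
    have hWm' : Measurable fun ω => ENNReal.ofReal |Yseq n (τ.1 ω) ω| :=
      (continuous_abs.measurable.comp hWm).ennreal_ofReal
    have hAM : MeasurableSet {ω | M ≤ |Yseq n (τ.1 ω) ω|} :=
      measurableSet_le measurable_const (continuous_abs.measurable.comp hWm)
    have hDint : ∫⁻ ω, ENNReal.ofReal |Yseq n (τ.1 ω) ω - Y (τ.1 ω) ω| ∂Q ≤ ε8 :=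
      le_trans (le_Dnorm τ hQ _) hDn
    -- the three sets
    set A := {ω | N ≤ |Y (τ.1 ω) ω|} with hA
    set A1 := {ω | N/2 ≤ |Yseq n (τ.1 ω) ω - Y (τ.1 ω) ω|} with hA1
    set A2 := {ω | N/2 ≤ |Yseq n (τ.1 ω) ω|} with hA2
    have hsplit : A ⊆ A1 ∪ A2 := by
      intro ω hω
      simp only [hA, hA1, hA2, mem_setOf_eq, Set.mem_union] at hω ⊢
      by_contra hcon
      push_neg at hcon
      have h1 := abs_sub_le (Y (τ.1 ω) ω) (Yseq n (τ.1 ω) ω) 0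
      rw [sub_zero, sub_zero] at h1
      rw [abs_sub_comm] at h1
      linarith [hcon.1, hcon.2]
    -- Markov bound for Q A1
    have hmarkov : ENNReal.ofReal M * Q A1 ≤ ε8 := by
      have h0 : A1 = {ω | ENNReal.ofReal (N/2) ≤
          ENNReal.ofReal |Yseq n (τ.1 ω) ω - Y (τ.1 ω) ω|} := by
        ext ω
        simp only [hA1, mem_setOf_eq]
        rw [ENNReal.ofReal_le_ofReal_iff (abs_nonneg _)]
      have h1 := mul_meas_ge_le_lintegral₀ (μ := Q) hDm.aemeasurable (ENNReal.ofReal (N/2))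
      have h2 : ENNReal.ofReal (N/2) * Q A1 ≤ ε8 := by
        rw [h0]; exact le_trans h1 hDint
      have hMN : ENNReal.ofReal M ≤ ENNReal.ofReal (N/2) :=
        ENNReal.ofReal_le_ofReal (by linarith)
      exact le_trans (mul_le_mul_left hMN _) h2
    -- pointwise truncation bound
    have hstepA1 : ∫⁻ ω in A1, ENNReal.ofReal |Yseq n (τ.1 ω) ω| ∂Q ≤
        ENNReal.ofReal M * Q A1 +
        ∫⁻ ω in {ω | M ≤ |Yseq n (τ.1 ω) ω|}, ENNReal.ofReal |Yseq n (τ.1 ω) ω| ∂Q := by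
      have hptw : ∀ ω, ENNReal.ofReal |Yseq n (τ.1 ω) ω| ≤ ENNReal.ofReal M +
          Set.indicator {ω | M ≤ |Yseq n (τ.1 ω) ω|}
            (fun ω => ENNReal.ofReal |Yseq n (τ.1 ω) ω|) ω := by
        intro ω
        by_cases hM : M ≤ |Yseq n (τ.1 ω) ω|
        · rw [Set.indicator_of_mem (show ω ∈ {ω | M ≤ |Yseq n (τ.1 ω) ω|} from hM)]
          exact le_add_self
        · rw [Set.indicator_of_notMem (show ω ∉ {ω | M ≤ |Yseq n (τ.1 ω) ω|} from hM),
            add_zero]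
          exact ENNReal.ofReal_le_ofReal (le_of_not_ge hM)
      calc ∫⁻ ω in A1, ENNReal.ofReal |Yseq n (τ.1 ω) ω| ∂Q
          ≤ ∫⁻ ω in A1, (ENNReal.ofReal M +
              Set.indicator {ω | M ≤ |Yseq n (τ.1 ω) ω|}
                (fun ω => ENNReal.ofReal |Yseq n (τ.1 ω) ω|) ω) ∂Q :=
            lintegral_mono hptw
        _ = ENNReal.ofReal M * Q A1 + ∫⁻ ω in A1, Set.indicator
              {ω | M ≤ |Yseq n (τ.1 ω) ω|}
              (fun ω => ENNReal.ofReal |Yseq n (τ.1 ω) ω|) ω ∂Q := by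
            rw [lintegral_add_left measurable_const, setLIntegral_const]
        _ ≤ ENNReal.ofReal M * Q A1 + ∫⁻ ω, Set.indicator
              {ω | M ≤ |Yseq n (τ.1 ω) ω|}
              (fun ω => ENNReal.ofReal |Yseq n (τ.1 ω) ω|) ω ∂Q :=
            add_le_add_right (lintegral_mono' Measure.restrict_le_self le_rfl) _
        _ = ENNReal.ofReal M * Q A1 +
              ∫⁻ ω in {ω | M ≤ |Yseq n (τ.1 ω) ω|}, ENNReal.ofReal |Yseq n (τ.1 ω) ω| ∂Q := by
            rw [lintegral_indicator hAM]
    -- bounds through the UI suprema of Yseq n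
    have hun : ∀ c : ℝ, ∫⁻ ω in {ω | c ≤ |Yseq n (τ.1 ω) ω|},
        ENNReal.ofReal |Yseq n (τ.1 ω) ω| ∂Q ≤
        ⨆ τ' : STimes ℱ T, ⨆ Q' ∈ 𝒬,
          ∫⁻ ω in {ω | c ≤ |Yseq n (τ'.1 ω) ω|}, ENNReal.ofReal |Yseq n (τ'.1 ω) ω| ∂Q' := by
      intro c
      refine le_trans ?_ (le_iSup (fun τ' : STimes ℱ T => ⨆ Q' ∈ 𝒬,
        ∫⁻ ω in {ω | c ≤ |Yseq n (τ'.1 ω) ω|}, ENNReal.ofReal |Yseq n (τ'.1 ω) ω| ∂Q') τ)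
      exact le_biSup (fun Q' : Measure Ω => ∫⁻ ω in {ω | c ≤ |Yseq n (τ.1 ω) ω|},
        ENNReal.ofReal |Yseq n (τ.1 ω) ω| ∂Q') hQ
    -- assemble
    have hfinal : ∫⁻ ω in A, ENNReal.ofReal |Y (τ.1 ω) ω| ∂Q ≤ ε8 + ((ε8 + ε8) + ε8) := by
      calc ∫⁻ ω in A, ENNReal.ofReal |Y (τ.1 ω) ω| ∂Q
          ≤ ∫⁻ ω in A, (ENNReal.ofReal |Yseq n (τ.1 ω) ω - Y (τ.1 ω) ω|
              + ENNReal.ofReal |Yseq n (τ.1 ω) ω|) ∂Q := by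
            refine lintegral_mono fun ω => ?_
            rw [← ENNReal.ofReal_add (abs_nonneg _) (abs_nonneg _)]
            refine ENNReal.ofReal_le_ofReal ?_
            have h1 := abs_sub_le (Y (τ.1 ω) ω) (Yseq n (τ.1 ω) ω) 0
            rw [sub_zero, sub_zero] at h1
            rw [abs_sub_comm] at h1
            linarith
        _ = (∫⁻ ω in A, ENNReal.ofReal |Yseq n (τ.1 ω) ω - Y (τ.1 ω) ω| ∂Q)
              + ∫⁻ ω in A, ENNReal.ofReal |Yseq n (τ.1 ω) ω| ∂Q := lintegral_add_left hDm _
        _ ≤ ε8 + ((∫⁻ ω in A1, ENNReal.ofReal |Yseq n (τ.1 ω) ω| ∂Q)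
              + ∫⁻ ω in A2, ENNReal.ofReal |Yseq n (τ.1 ω) ω| ∂Q) := by
            refine add_le_add ?_ ?_
            · exact le_trans (lintegral_mono' Measure.restrict_le_self le_rfl) hDint
            · refine le_trans (lintegral_mono'
                (Measure.restrict_mono hsplit le_rfl) le_rfl) ?_
              exact lintegral_union_le _ _ _
        _ ≤ ε8 + ((ε8 + ε8) + ε8) := by
            refine add_le_add_right (add_le_add ?_ ?_) _
            · refine le_trans hstepA1 (add_le_add hmarkov ?_)
              exact le_trans (hun M) hMle
            · exact le_trans (hun (N/2)) hN1
    refine le_trans hfinal ?_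
    have h48 : ε8 + ((ε8 + ε8) + ε8) = 4 * (ε' / 8) := by rw [hε8def]; ring
    rw [h48]
    calc (4:ℝ≥0∞) * (ε' / 8) ≤ 8 * (ε' / 8) := mul_le_mul_left (by norm_num) _
      _ = ε' := ENNReal.mul_div_cancel' (by norm_num) (by norm_num)
  · -- convergence in the norm
    rw [ENNReal.tendsto_nhds_zero]
    intro ε hε
    obtain ⟨N0, hN0⟩ := hconv_le ε hε
    exact eventually_atTop.2 ⟨N0, hN0⟩
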